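/- Fix β > 0. Let (Ω, P) be a probability space carrying real-valued random variables D(a,b), indexed by rational pairs a,b ∈ [0,1], such that: (1) for all a,b, D(a,b) = D(b,a) almost surely; (2) for any finite collection of pairwise disjoint open intervals (a₁,b₁),…,(aₙ,bₙ) with rational endpoints in [0,1], the random variables D(a₁,b₁),…,D(aₙ,bₙ) are mutually independent; (3) D(a,a) = 0 almost surely for all a; (4) for all rational a < b < c in [0,1], D(a,c) = max(D(a,b), D(b,c)) almost surely; (5) for all rational a < b in [0,1], D(a,b) has the same law as (b−a)^β · D(0,1). Then there exists t ≤ 0 such that for every finite collection of pairwise disjoint open intervals (a₁,b₁),…,(aₙ,bₙ) with rational endpoints in [0,1] and all reals r₁,…,rₙ > 0, P[D(aᵢ,bᵢ) ≤ rᵢ for all i = 1,…,n] = ∏_{i=1}^n exp(t·(bᵢ−aᵢ)·rᵢ^{−1/β}). -/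

import Mathlib

open MeasureTheory ProbabilityTheory

/-- Proposition 2.8: a family of random variables `D(a,b)`, indexed by rational
pairs in `[0,1]`, that is symmetric, independent over disjoint intervals,
vanishing on the diagonal, maximal over concatenations, and scaling with
exponent `β`, has the joint law of the sub-interval maxima of a Poisson point
process on `[0,1] × ℝ₊` with intensity `ds ⊗ x^{-1/β-1} dx`; equivalently its
finite-dimensional distribution functions over disjoint intervals are products
of `exp (t (b-a) r^{-1/β})` for some `t ≤ 0`. -/
theorem slice_independence_characterization
    (β : ℝ) (hβ : 0 < β)
    {Ω : Type*} [MeasurableSpace Ω] (P : Measure Ω) [IsProbabilityMeasure P]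
    (D : ℚ → ℚ → Ω → ℝ)
    (hmeas : ∀ a b : ℚ, Measurable (D a b))
    (hsym : ∀ a b : ℚ, a ∈ Set.Icc (0 : ℚ) 1 → b ∈ Set.Icc (0 : ℚ) 1 →
      ∀ᵐ ω ∂P, D a b ω = D b a ω)
    (hindep : ∀ (n : ℕ) (a b : Fin n → ℚ),
      (∀ i, a i ∈ Set.Icc (0 : ℚ) 1 ∧ b i ∈ Set.Icc (0 : ℚ) 1 ∧ a i < b i) →
      (Pairwise fun i j => Disjoint (Set.Ioo (a i) (b i)) (Set.Ioo (a j) (b j))) →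
      iIndepFun
        (fun i => D (a i) (b i)) P)
    (hdiag : ∀ a : ℚ, a ∈ Set.Icc (0 : ℚ) 1 → ∀ᵐ ω ∂P, D a a ω = 0)
    (hmax : ∀ a b c : ℚ, a ∈ Set.Icc (0 : ℚ) 1 → b ∈ Set.Icc (0 : ℚ) 1 →
      c ∈ Set.Icc (0 : ℚ) 1 → a < b → b < c →
      ∀ᵐ ω ∂P, D a c ω = max (D a b ω) (D b c ω))
    (hscale : ∀ a b : ℚ, a ∈ Set.Icc (0 : ℚ) 1 → b ∈ Set.Icc (0 : ℚ) 1 → a < b →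
      Measure.map (D a b) P
        = Measure.map (fun ω => ((b : ℝ) - (a : ℝ)) ^ β * D 0 1 ω) P) :
    ∃ t : ℝ, t ≤ 0 ∧
      ∀ (n : ℕ) (a b : Fin n → ℚ),
        (∀ i, a i ∈ Set.Icc (0 : ℚ) 1 ∧ b i ∈ Set.Icc (0 : ℚ) 1 ∧ a i < b i) →
        (Pairwise fun i j => Disjoint (Set.Ioo (a i) (b i)) (Set.Ioo (a j) (b j))) →
        ∀ r : Fin n → ℝ, (∀ i, 0 < r i) →
          P {ω | ∀ i, D (a i) (b i) ω ≤ r i}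
            = ENNReal.ofReal
                (∏ i, Real.exp (t * ((b i : ℝ) - (a i : ℝ)) * (r i) ^ (-1 / β))) := by
  classical
  have hβ' : β ≠ 0 := ne_of_gt hβ
  set F : ℝ → ℝ := fun r => (P {ω | D 0 1 ω ≤ r}).toReal with hFdef
  have hm01 : (0 : ℚ) ∈ Set.Icc (0 : ℚ) 1 := by norm_num
  have hFnn : ∀ r, 0 ≤ F r := fun r => ENNReal.toReal_nonneg
  have hFle1 : ∀ r, F r ≤ 1 := by
    intro r
    have h1 : P {ω | D 0 1 ω ≤ r} ≤ 1 := prob_le_one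
    simpa using ENNReal.toReal_mono ENNReal.one_ne_top h1
  have hFmono : ∀ ⦃r r' : ℝ⦄, r ≤ r' → F r ≤ F r' := by
    intro r r' h
    refine ENNReal.toReal_mono (measure_ne_top P _) (measure_mono ?_)
    intro ω hω
    exact le_trans hω h
  -- scaling in terms of `F`
  have hscale'' : ∀ a b : ℚ, a ∈ Set.Icc (0 : ℚ) 1 → b ∈ Set.Icc (0 : ℚ) 1 → a < b →
      ∀ r : ℝ, P {ω | D a b ω ≤ r}
        = ENNReal.ofReal (F (r / ((b : ℝ) - (a : ℝ)) ^ β)) := by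
    intro a b ha hb hab r
    have hba : (0 : ℝ) < (b : ℝ) - (a : ℝ) := by
      have : (a : ℝ) < (b : ℝ) := by exact_mod_cast hab
      linarith
    have hc : (0 : ℝ) < ((b : ℝ) - (a : ℝ)) ^ β := Real.rpow_pos_of_pos hba β
    have h1 : P {ω | D a b ω ≤ r} = Measure.map (D a b) P (Set.Iic r) := by
      rw [Measure.map_apply (hmeas a b) measurableSet_Iic]
      rfl
    rw [h1, hscale a b ha hb hab,
      Measure.map_apply ((hmeas 0 1).const_mul _) measurableSet_Iic]
    have h2 : (fun ω => ((b : ℝ) - (a : ℝ)) ^ β * D 0 1 ω) ⁻¹' Set.Iic r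
        = {ω | D 0 1 ω ≤ r / ((b : ℝ) - (a : ℝ)) ^ β} := by
      ext ω
      simp only [Set.mem_preimage, Set.mem_Iic, Set.mem_setOf_eq]
      rw [mul_comm]
      exact (le_div_iff₀ hc).symm
    rw [h2, ← ENNReal.ofReal_toReal (measure_ne_top P _)]
  -- product rule over a concatenation
  have key2 : ∀ a b c : ℚ, a ∈ Set.Icc (0 : ℚ) 1 → b ∈ Set.Icc (0 : ℚ) 1 →
      c ∈ Set.Icc (0 : ℚ) 1 → a < b → b < c → ∀ r : ℝ,
      P {ω | D a c ω ≤ r} = P {ω | D a b ω ≤ r} * P {ω | D b c ω ≤ r} := by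
    intro a b c ha hb hc hab hbc r
    have hd : Disjoint (Set.Ioo a b) (Set.Ioo b c) := by
      rw [Set.disjoint_left]
      rintro x ⟨_, hx2⟩ ⟨hx3, _⟩
      exact absurd (hx2.trans hx3) (lt_irrefl x)
    have hiid := hindep 2 ![a, b] ![b, c]
      (by
        intro i
        fin_cases i
        · exact ⟨ha, hb, hab⟩
        · exact ⟨hb, hc, hbc⟩)
      (by
        intro i j hij
        fin_cases i <;> fin_cases j
        · exact absurd rfl hij
        · simpa using hd
        · simpa using hd.symm
        · exact absurd rfl hij)
    have hind : IndepFun (D a b) (D b c) P := by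
      have h01 : (0 : Fin 2) ≠ 1 := by decide
      have := hiid.indepFun h01
      simpa using this
    have hmul := hind.measure_inter_preimage_eq_mul (Set.Iic r) (Set.Iic r)
      measurableSet_Iic measurableSet_Iic
    have hseteq : P {ω | D a c ω ≤ r}
        = P ({ω | D a b ω ≤ r} ∩ {ω | D b c ω ≤ r}) := by
      apply measure_congr
      refine Filter.eventuallyEq_set.mpr ?_
      filter_upwards [hmax a b c ha hb hc hab hbc] with ω hω
      simp [Set.mem_setOf_eq, Set.mem_inter_iff, hω, max_le_iff]
    rw [hseteq]
    exact hmul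
  -- iterated product rule for equal subdivisions
  have keyC : ∀ m : ℕ, 1 ≤ m → ∀ h : ℚ, 0 < h → (m : ℚ) * h ≤ 1 → ∀ r : ℝ,
      P {ω | D 0 ((m : ℚ) * h) ω ≤ r} = P {ω | D 0 h ω ≤ r} ^ m := by
    intro m hm
    induction m, hm using Nat.le_induction with
    | base =>
      intro h h0 h1 r
      rw [Nat.cast_one, one_mul, pow_one]
    | succ m hm ih =>
      intro h h0 h1 r
      have hmh : (m : ℚ) * h < ((m + 1 : ℕ) : ℚ) * h := by
        push_cast
        nlinarith
      have hm1h : ((m + 1 : ℕ) : ℚ) * h ≤ 1 := h1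
      have h0m : (0 : ℚ) < (m : ℚ) * h := by
        have : (1 : ℚ) ≤ (m : ℚ) := by exact_mod_cast hm
        nlinarith
      have hmemm : (m : ℚ) * h ∈ Set.Icc (0 : ℚ) 1 :=
        ⟨le_of_lt h0m, le_trans (le_of_lt hmh) hm1h⟩
      have hmemm1 : ((m + 1 : ℕ) : ℚ) * h ∈ Set.Icc (0 : ℚ) 1 :=
        ⟨le_trans (le_of_lt h0m) (le_of_lt hmh), hm1h⟩
      have hmemh : h ∈ Set.Icc (0 : ℚ) 1 := by
        constructor
        · exact le_of_lt h0
        · calc h = 1 * h := (one_mul h).symm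
            _ ≤ (m : ℚ) * h := by
                have : (1 : ℚ) ≤ (m : ℚ) := by exact_mod_cast hm
                nlinarith
            _ ≤ 1 := hmemm.2
      rw [key2 0 ((m : ℚ) * h) (((m + 1 : ℕ) : ℚ) * h) hm01 hmemm hmemm1 h0m hmh r]
      rw [ih h h0 hmemm.2 r]
      have e1 := hscale'' ((m : ℚ) * h) (((m + 1 : ℕ) : ℚ) * h) hmemm hmemm1 hmh r
      have e2 := hscale'' 0 h hm01 hmemh h0 r
      have ecast : ((((m + 1 : ℕ) : ℚ) * h : ℚ) : ℝ) - (((m : ℚ) * h : ℚ) : ℝ)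
          = ((h : ℚ) : ℝ) - ((0 : ℚ) : ℝ) := by
        push_cast
        ring
      rw [e1, ecast, ← e2, pow_succ]
  -- in terms of `F`
  have keyF : ∀ m : ℕ, 1 ≤ m → ∀ h : ℚ, 0 < h → (m : ℚ) * h ≤ 1 → ∀ r : ℝ,
      F (r / ((m : ℝ) * (h : ℝ)) ^ β) = F (r / (h : ℝ) ^ β) ^ m := by
    intro m hm h h0 h1 r
    have h0m : (0 : ℚ) < (m : ℚ) * h := by
      have : (1 : ℚ) ≤ (m : ℚ) := by exact_mod_cast hm
      nlinarith
    have hmemm : (m : ℚ) * h ∈ Set.Icc (0 : ℚ) 1 := ⟨le_of_lt h0m, h1⟩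
    have hmemh : h ∈ Set.Icc (0 : ℚ) 1 := by
      constructor
      · exact le_of_lt h0
      · calc h = 1 * h := (one_mul h).symm
          _ ≤ (m : ℚ) * h := by
              have : (1 : ℚ) ≤ (m : ℚ) := by exact_mod_cast hm
              nlinarith
          _ ≤ 1 := h1
    have e0 := keyC m hm h h0 h1 r
    rw [hscale'' 0 ((m : ℚ) * h) hm01 hmemm h0m r,
       hscale'' 0 h hm01 hmemh h0 r] at e0
    rw [← ENNReal.ofReal_pow (hFnn _)] at e0
    have e1 : F ((r : ℝ) / ((((m : ℚ) * h : ℚ) : ℝ) - ((0 : ℚ) : ℝ)) ^ β)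
        = F (r / (((h : ℚ) : ℝ) - ((0 : ℚ) : ℝ)) ^ β) ^ m :=
      (ENNReal.ofReal_eq_ofReal_iff (hFnn _) (pow_nonneg (hFnn _) m)).mp e0
    have c1 : ((((m : ℚ) * h : ℚ) : ℝ) - ((0 : ℚ) : ℝ)) = (m : ℝ) * (h : ℝ) := by
      push_cast; ring
    have c2 : (((h : ℚ) : ℝ) - ((0 : ℚ) : ℝ)) = (h : ℝ) := by push_cast; ring
    rw [c1, c2] at e1
    exact e1
  -- the key functional equation
  have relPQle : ∀ p q : ℕ, 0 < p → p ≤ q → ∀ r : ℝ,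
      F (r / ((p : ℝ) / (q : ℝ)) ^ β) ^ q = F r ^ p := by
    intro p q hp hpq r
    have hq : 0 < q := lt_of_lt_of_le hp hpq
    have hq0 : (0 : ℚ) < 1 / (q : ℚ) := by positivity
    have hA := keyF p hp (1 / (q : ℚ)) hq0
      (by
        rw [mul_one_div]
        rw [div_le_one (by exact_mod_cast hq)]
        exact_mod_cast hpq) r
    have hB := keyF q hq (1 / (q : ℚ)) hq0
      (by
        rw [mul_one_div, div_self (by positivity)]) r
    have hcast : ((1 / (q : ℚ) : ℚ) : ℝ) = 1 / (q : ℝ) := by push_cast; ring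
    rw [hcast] at hA hB
    have hqR : (0 : ℝ) < (q : ℝ) := by exact_mod_cast hq
    have hBB : F r = F (r / (1 / (q : ℝ)) ^ β) ^ q := by
      have : (q : ℝ) * (1 / (q : ℝ)) = 1 := by field_simp
      rw [this, Real.one_rpow, div_one] at hB
      exact hB
    have hAA : F (r / ((p : ℝ) / (q : ℝ)) ^ β) = F (r / (1 / (q : ℝ)) ^ β) ^ p := by
      have : (p : ℝ) * (1 / (q : ℝ)) = (p : ℝ) / (q : ℝ) := by ring
      rw [this] at hA
      exact hA
    rw [hAA, hBB, ← pow_mul, ← pow_mul, Nat.mul_comm]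
  have relPQ : ∀ p q : ℕ, 0 < p → 0 < q → ∀ r : ℝ,
      F (r / ((p : ℝ) / (q : ℝ)) ^ β) ^ q = F r ^ p := by
    intro p q hp hq r
    rcases le_or_gt p q with hpq | hqp
    · exact relPQle p q hp hpq r
    · have h := relPQle q p hq (le_of_lt hqp) (r / ((p : ℝ) / (q : ℝ)) ^ β)
      have hpR : (0 : ℝ) < (p : ℝ) := by exact_mod_cast hp
      have hqR : (0 : ℝ) < (q : ℝ) := by exact_mod_cast hq
      have hmul : ((p : ℝ) / (q : ℝ)) ^ β * ((q : ℝ) / (p : ℝ)) ^ β = 1 := by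
        rw [← Real.mul_rpow (by positivity) (by positivity)]
        rw [show (p : ℝ) / (q : ℝ) * ((q : ℝ) / (p : ℝ)) = 1 by field_simp]
        exact Real.one_rpow β
      have harg : r / ((p : ℝ) / (q : ℝ)) ^ β / ((q : ℝ) / (p : ℝ)) ^ β = r := by
        rw [div_div, hmul, div_one]
      rw [harg] at h
      exact h.symm
  -- positivity of F on positive reals
  have hr0 : ∃ r₀ : ℝ, 0 < r₀ ∧ 0 < F r₀ := by
    by_contra hcon
    push_neg at hcon
    have hzero : ∀ n : ℕ, P {ω | D 0 1 ω ≤ (n : ℝ) + 1} = 0 := by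
      intro n
      have h1 := hcon ((n : ℝ) + 1) (by positivity)
      have h2 : F ((n : ℝ) + 1) = 0 := le_antisymm h1 (hFnn _)
      have := measure_ne_top P {ω | D 0 1 ω ≤ (n : ℝ) + 1}
      exact (ENNReal.toReal_eq_zero_iff _).mp h2 |>.resolve_right this
    have hunion : (⋃ n : ℕ, {ω | D 0 1 ω ≤ (n : ℝ) + 1}) = Set.univ := by
      ext ω
      simp only [Set.mem_iUnion, Set.mem_setOf_eq, Set.mem_univ, iff_true]
      obtain ⟨n, hn⟩ := exists_nat_ge (D 0 1 ω)
      exact ⟨n, by linarith⟩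
    have h1 : P Set.univ = 0 := by
      rw [← hunion]
      exact measure_iUnion_null fun n => hzero n
    simp at h1
  obtain ⟨r₀, hr₀pos, hFr₀⟩ := hr0
  have hFpos : ∀ s : ℝ, 0 < s → 0 < F s := by
    intro s hs
    obtain ⟨k₀, hk₀⟩ := exists_nat_ge ((r₀ / s) ^ (1 / β))
    set k := k₀ + 1 with hk
    have hk1 : 1 ≤ k := Nat.le_add_left 1 k₀
    have hkR : (0 : ℝ) < (k : ℝ) := by positivity
    have hkβ : r₀ / s ≤ (k : ℝ) ^ β := by
      have h1 : ((r₀ / s) ^ (1 / β)) ^ β ≤ (k : ℝ) ^ β := by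
        apply Real.rpow_le_rpow (Real.rpow_nonneg (by positivity) _) _ hβ.le
        calc ((r₀ / s) ^ (1 / β) : ℝ) ≤ (k₀ : ℝ) := hk₀
          _ ≤ (k : ℝ) := by exact_mod_cast Nat.le_succ k₀
      rwa [← Real.rpow_mul (by positivity), one_div_mul_cancel hβ', Real.rpow_one] at h1
    have hrel := relPQ 1 k one_pos (by omega) s
    have h1 : ((1 : ℕ) : ℝ) / (k : ℝ) = 1 / (k : ℝ) := by norm_num
    rw [h1] at hrel
    have h2 : s / (1 / (k : ℝ)) ^ β = s * (k : ℝ) ^ β := by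
      have hkβ0 : ((k : ℝ)) ^ β ≠ 0 := ne_of_gt (Real.rpow_pos_of_pos hkR β)
      rw [Real.div_rpow zero_le_one hkR.le, Real.one_rpow]
      field_simp
    rw [h2, pow_one] at hrel
    have h3 : r₀ ≤ s * (k : ℝ) ^ β := by
      rw [div_le_iff₀ hs] at hkβ
      linarith [hkβ]
    have h4 : 0 < F (s * (k : ℝ) ^ β) := lt_of_lt_of_le hFr₀ (hFmono h3)
    rw [← hrel]
    exact pow_pos h4 k
  -- the constant t
  set t : ℝ := Real.log (F 1) with htdef
  have ht : t ≤ 0 := Real.log_nonpos (hFnn 1) (hFle1 1)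
  -- log F at rational power points
  have hlogw : ∀ w : ℚ, 0 < w → Real.log (F ((w : ℝ) ^ β)) = t / (w : ℝ) := by
    intro w hw
    set p := w.num.toNat with hpdef
    set q := w.den with hqdef
    have hnum : 0 < w.num := Rat.num_pos.mpr hw
    have hp : 0 < p := by
      rw [hpdef]
      omega
    have hq : 0 < q := w.pos
    have hwpq : (w : ℝ) = (p : ℝ) / (q : ℝ) := by
      rw [Rat.cast_def]
      congr 1
      rw [hpdef]
      exact_mod_cast (Int.toNat_of_nonneg hnum.le).symm
    have hpR : (0 : ℝ) < (p : ℝ) := by exact_mod_cast hp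
    have hqR : (0 : ℝ) < (q : ℝ) := by exact_mod_cast hq
    have hrel := relPQ q p hq hp 1
    have harg : (1 : ℝ) / ((q : ℝ) / (p : ℝ)) ^ β = (w : ℝ) ^ β := by
      rw [hwpq]
      rw [show (p : ℝ) / (q : ℝ) = ((q : ℝ) / (p : ℝ))⁻¹ by field_simp]
      rw [Real.inv_rpow (by positivity)]
      exact (one_div _)
    rw [harg] at hrel
    have hlog := congrArg Real.log hrel
    rw [Real.log_pow, Real.log_pow] at hlog
    have : Real.log (F ((w : ℝ) ^ β)) = (q : ℝ) * t / (p : ℝ) := by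
      rw [eq_div_iff (ne_of_gt hpR)]
      linarith [hlog]
    rw [this, hwpq]
    field_simp
  -- the determination of F on all positive reals
  have hmain : ∀ s : ℝ, 0 < s → Real.log (F s) = t * s ^ (-1 / β) := by
    intro s hs
    set y := s ^ (1 / β) with hydef
    have hy : 0 < y := Real.rpow_pos_of_pos hs _
    have hyβ : y ^ β = s := by
      rw [hydef, ← Real.rpow_mul hs.le, one_div_mul_cancel hβ', Real.rpow_one]
    have hsneg : s ^ (-1 / β) = 1 / y := by
      rw [hydef, neg_div, Real.rpow_neg hs.le]
      exact (one_div _).symm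
    set c := Real.log (F s) with hcdef
    have upper : ∀ w : ℚ, y < (w : ℝ) → c ≤ t / (w : ℝ) := by
      intro w hw
      have hw0 : (0 : ℝ) < (w : ℝ) := lt_trans hy hw
      have hwQ : 0 < w := by exact_mod_cast hw0
      have hlt : s < (w : ℝ) ^ β := by
        rw [← hyβ]
        exact Real.rpow_lt_rpow hy.le hw hβ
      have := Real.log_le_log (hFpos s hs) (hFmono hlt.le)
      rw [hlogw w hwQ] at this
      exact this
    have lower : ∀ w : ℚ, 0 < (w : ℝ) → (w : ℝ) < y → t / (w : ℝ) ≤ c := by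
      intro w hw0 hw
      have hwQ : 0 < w := by exact_mod_cast hw0
      have hlt : (w : ℝ) ^ β < s := by
        rw [← hyβ]
        exact Real.rpow_lt_rpow hw0.le hw hβ
      have := Real.log_le_log (hFpos _ (Real.rpow_pos_of_pos hw0 β)) (hFmono hlt.le)
      rw [hlogw w hwQ] at this
      exact this
    have hc : c = t / y := by
      rcases eq_or_lt_of_le ht with hteq | htlt
      · -- t = 0
        have h0 : ∀ w : ℚ, 0 < (w : ℝ) → (w : ℝ) < y → (0 : ℝ) ≤ c := by
          intro w hw0 hw
          have := lower w hw0 hw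
          rw [hteq] at this
          simpa using this
        obtain ⟨w, hw1, hw2⟩ := exists_rat_btwn (half_pos hy)
        have hcnn : (0 : ℝ) ≤ c := h0 w hw1 (hw2.trans (half_lt_self hy))
        have hcnp : c ≤ 0 := Real.log_nonpos (hFnn s) (hFle1 s)
        rw [hteq, zero_div]
        linarith
      · -- t < 0
        refine le_antisymm ?_ ?_
        · by_contra hcon
          push_neg at hcon
          have hc0 : c < 0 := by
            obtain ⟨w, hw1, hw2⟩ := exists_rat_btwn (lt_add_one y)
            have := upper w hw1
            have hw0 : (0 : ℝ) < (w : ℝ) := lt_trans hy hw1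
            have : t / (w : ℝ) < 0 := div_neg_of_neg_of_pos htlt hw0
            linarith [upper w hw1]
          have hty : t < c * y := (div_lt_iff₀ hy).mp hcon
          have hycy : y < t / c := by
            rw [lt_div_iff_of_neg hc0]
            linarith [mul_comm c y]
          obtain ⟨w, hw1, hw2⟩ := exists_rat_btwn hycy
          have hup := upper w hw1
          have hw0 : (0 : ℝ) < (w : ℝ) := lt_trans hy hw1
          have h1 : t < (w : ℝ) * c := (lt_div_iff_of_neg hc0).mp hw2
          have h2 : t / (w : ℝ) < c := by
            rw [div_lt_iff₀ hw0]
            linarith [mul_comm (w : ℝ) c]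
          linarith
        · by_contra hcon
          push_neg at hcon
          have hty0 : t / y < 0 := div_neg_of_neg_of_pos htlt hy
          have hc0 : c < 0 := lt_trans hcon hty0
          have h1 : c * y < t := (lt_div_iff₀ hy).mp hcon
          have h2 : t / c < y := by
            rw [div_lt_iff_of_neg hc0]
            linarith [mul_comm c y]
          have h0tc : 0 < t / c := div_pos_of_neg_of_neg htlt hc0
          obtain ⟨w, hw1, hw2⟩ := exists_rat_btwn h2
          have hw0 : (0 : ℝ) < (w : ℝ) := lt_trans h0tc hw1
          have hlow := lower w hw0 hw2
          have h3 : (w : ℝ) * c < t := (div_lt_iff_of_neg hc0).mp hw1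
          have h4 : c < t / (w : ℝ) := by
            rw [lt_div_iff₀ hw0]
            linarith [mul_comm c (w : ℝ)]
          linarith
    rw [hc, hsneg]
    rw [div_eq_mul_one_div]
  have hexp : ∀ s : ℝ, 0 < s → F s = Real.exp (t * s ^ (-1 / β)) := by
    intro s hs
    rw [← hmain s hs, Real.exp_log (hFpos s hs)]
  -- conclusion
  refine ⟨t, ht, ?_⟩
  intro n a b hab hdisj r hr
  have hiid := hindep n a b hab hdisj
  have hseteq : {ω | ∀ i, D (a i) (b i) ω ≤ r i}
      = ⋂ i, {ω | D (a i) (b i) ω ≤ r i} := by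
    ext ω
    simp [Set.mem_iInter]
  have hprod := hiid.meas_iInter (s := fun i => {ω | D (a i) (b i) ω ≤ r i})
    (fun i => ⟨Set.Iic (r i), measurableSet_Iic, rfl⟩)
  rw [hseteq, hprod]
  have hfac : ∀ i, P {ω | D (a i) (b i) ω ≤ r i}
      = ENNReal.ofReal (Real.exp (t * ((b i : ℝ) - (a i : ℝ)) * (r i) ^ (-1 / β))) := by
    intro i
    obtain ⟨hai, hbi, habi⟩ := hab i
    have hci : (0 : ℝ) < (b i : ℝ) - (a i : ℝ) := by
      have : ((a i : ℝ)) < (b i : ℝ) := by exact_mod_cast habi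
      linarith
    have hciβ : (0 : ℝ) < ((b i : ℝ) - (a i : ℝ)) ^ β := Real.rpow_pos_of_pos hci β
    rw [hscale'' (a i) (b i) hai hbi habi (r i)]
    have harg : 0 < r i / ((b i : ℝ) - (a i : ℝ)) ^ β := div_pos (hr i) hciβ
    rw [hexp _ harg]
    congr 2
    have hexpo : (r i / ((b i : ℝ) - (a i : ℝ)) ^ β) ^ (-1 / β)
        = ((b i : ℝ) - (a i : ℝ)) * (r i) ^ (-1 / β) := by
      rw [Real.div_rpow (hr i).le hciβ.le]
      rw [← Real.rpow_mul hci.le]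
      rw [show β * (-1 / β) = (-1 : ℝ) by field_simp]
      rw [Real.rpow_neg_one, div_inv_eq_mul]
      ring
    rw [hexpo]
    ring
  calc (∏ i, P {ω | D (a i) (b i) ω ≤ r i})
      = ∏ i, ENNReal.ofReal (Real.exp (t * ((b i : ℝ) - (a i : ℝ)) * (r i) ^ (-1 / β))) := by
        exact Finset.prod_congr rfl fun i _ => hfac i
    _ = ENNReal.ofReal
          (∏ i, Real.exp (t * ((b i : ℝ) - (a i : ℝ)) * (r i) ^ (-1 / β))) :=
        (ENNReal.ofReal_prod_of_nonneg fun i _ => (Real.exp_pos _).le).symm
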